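/- arXiv:0808.2584 — 2 statements merged into one kernel-verified Lean document; each statement's English description precedes it below -/
import Mathlib

section
/- Let k, l, d, w, e be natural numbers with k > 2, l ≥ 2, e > 1, d > 0, and l ≥ 2k − 4, and let ems = (2^k · l)/2 = 2^(k−1)·l. If d ≤ 2^l − w − 1 and e ≤ 2^(k−2), then ((d + w)·e² + 2)^e < 2^ems. -/
theorem stmt_4 (k l d w e : ℕ) (hk : k > 2) (hl : l ≥ 2) (he : e > 1) (hd : d > 0)
    (hlk : l ≥ 2 * k - 4) (hdw : d ≤ 2 ^ l - w - 1) (hek : e ≤ 2 ^ (k - 2)) :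
    ((d + w) * e ^ 2 + 2) ^ e < 2 ^ (2 ^ (k - 1) * l) := by
  set N := 2 ^ l with hN
  have hN4 : 4 ≤ N := by
    calc 4 = 2 ^ 2 := rfl
    _ ≤ N := Nat.pow_le_pow_right (by norm_num) hl
  have hdwN : d + w ≤ N - 1 := by omega
  have he2 : e ^ 2 ≤ N := by
    calc e ^ 2 ≤ (2 ^ (k - 2)) ^ 2 := Nat.pow_le_pow_left hek 2
    _ = 2 ^ ((k - 2) * 2) := by rw [← pow_mul]
    _ ≤ 2 ^ l := Nat.pow_le_pow_right (by norm_num) (by omega)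
  have hbase : (d + w) * e ^ 2 + 2 < N ^ 2 := by
    have h1 : (d + w) * e ^ 2 ≤ (N - 1) * N := Nat.mul_le_mul hdwN he2
    have h2 : (N - 1) * N + 2 < N ^ 2 := by
      obtain ⟨t, ht⟩ : ∃ t, N = t + 1 := ⟨N - 1, by omega⟩
      have ht3 : 3 ≤ t := by omega
      rw [ht, Nat.add_sub_cancel]
      nlinarith
    omega
  have hmul : l * 2 * e ≤ 2 ^ (k - 1) * l := by
    have h2e : 2 * e ≤ 2 ^ (k - 1) := by
      have : 2 ^ (k - 1) = 2 * 2 ^ (k - 2) := by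
        rw [← pow_succ']; congr 1; omega
      omega
    calc l * 2 * e = (2 * e) * l := by ring
    _ ≤ 2 ^ (k - 1) * l := Nat.mul_le_mul_right l h2e
  calc ((d + w) * e ^ 2 + 2) ^ e < (N ^ 2) ^ e := Nat.pow_lt_pow_left hbase (by omega)
  _ = 2 ^ (l * 2 * e) := by rw [hN, ← pow_mul, ← pow_mul, Nat.mul_assoc]
  _ ≤ 2 ^ (2 ^ (k - 1) * l) := Nat.pow_le_pow_right (by norm_num) hmul
end

section
/- Let k > 2, l > 1, m, d > 0, e > 1, w be natural numbers with l ≥ 2k − 4, and set ems = 2^(k−1)·l. If m + ims ≤ ems/2, d ≤ 2^l − w − 1, and e ≤ 2^(k−2), then ((2^(ems/2))^(2^(ems/2)))^d · ((d+w)·e² + 2)^e < (2^ems)^(2^ems). -/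
set_option maxHeartbeats 800000


theorem stmt_19 (k l m d e w ims : ℕ) (hk : k > 2) (hl : l > 1) (hm : m > 0)
    (hd : d > 0) (he : e > 1) (hlk : l ≥ 2 * k - 4)
    (hmi : m + ims ≤ (2 ^ (k - 1) * l) / 2) (hdw : d ≤ 2 ^ l - w - 1)
    (hek : e ≤ 2 ^ (k - 2)) :
    ((2 ^ ((2 ^ (k - 1) * l) / 2)) ^ (2 ^ ((2 ^ (k - 1) * l) / 2))) ^ d
        * ((d + w) * e ^ 2 + 2) ^ e
      < (2 ^ (2 ^ (k - 1) * l)) ^ (2 ^ (2 ^ (k - 1) * l)) := by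
  obtain ⟨K, rfl⟩ : ∃ K, k = K + 3 := ⟨k - 3, by omega⟩
  have e1 : K + 3 - 1 = K + 2 := rfl
  have e2 : K + 3 - 2 = K + 1 := rfl
  rw [e1] at *
  rw [e2] at hek
  set a := 2 ^ (K + 1) * l with ha
  have h2 : 2 ^ (K + 2) * l = 2 * a := by
    rw [ha, ← mul_assoc, pow_succ, mul_comm (2^(K+1)) 2]
  rw [h2] at *
  rw [Nat.mul_div_cancel_left a two_pos] at *
  -- basic facts
  have hK2 : (2:ℕ) ≤ 2 ^ (K + 1) := by
    calc (2:ℕ) = 2 ^ 1 := rfl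
    _ ≤ 2 ^ (K + 1) := Nat.pow_le_pow_right (by norm_num) (by omega)
  have hal : 2 * l ≤ a := by
    rw [ha]; exact Nat.mul_le_mul_right l hK2
  have ha4 : 4 ≤ a := by omega
  have hdw' : d + w + 1 ≤ 2 ^ l := by omega
  have hd2 : d ≤ 2 ^ l := by omega
  have hP2 : (2:ℕ) ≤ 2 ^ l := by
    calc (2:ℕ) = 2 ^ 1 := rfl
    _ ≤ 2 ^ l := Nat.pow_le_pow_right (by norm_num) (by omega)
  -- e^2 ≤ 2^l
  have he2 : e ^ 2 ≤ 2 ^ l := by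
    calc e ^ 2 ≤ (2 ^ (K + 1)) ^ 2 := Nat.pow_le_pow_left hek 2
    _ = 2 ^ (2 * (K + 1)) := by rw [← pow_mul, mul_comm]
    _ ≤ 2 ^ l := Nat.pow_le_pow_right (by norm_num) (by omega)
  -- X ≤ 2^(2l)
  have hX : (d + w) * e ^ 2 + 2 ≤ 2 ^ (2 * l) := by
    have h1 : (d + w) * e ^ 2 ≤ (2 ^ l - 1) * 2 ^ l :=
      Nat.mul_le_mul (by omega) he2
    have h2 : 2 ^ (2 * l) = 2 ^ l * 2 ^ l := by rw [two_mul, pow_add]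
    nlinarith [hP2]
  have hXe : ((d + w) * e ^ 2 + 2) ^ e ≤ 2 ^ (2 * l * e) := by
    calc ((d + w) * e ^ 2 + 2) ^ e ≤ (2 ^ (2 * l)) ^ e := Nat.pow_le_pow_left hX e
    _ = 2 ^ (2 * l * e) := by rw [← pow_mul]
  -- rewrite everything as powers of 2
  have lhs1 : ((2 ^ a) ^ 2 ^ a) ^ d = 2 ^ (a * 2 ^ a * d) := by
    rw [← pow_mul, ← pow_mul]
    congr 1
    ring
  have rhs1 : ((2:ℕ) ^ (2 * a)) ^ 2 ^ (2 * a) = 2 ^ (2 * a * 2 ^ (2 * a)) := by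
    rw [← pow_mul]
  rw [lhs1, rhs1]
  calc ((2:ℕ) ^ (a * 2 ^ a * d)) * ((d + w) * e ^ 2 + 2) ^ e
      ≤ 2 ^ (a * 2 ^ a * d) * 2 ^ (2 * l * e) := Nat.mul_le_mul_left _ hXe
    _ = 2 ^ (a * 2 ^ a * d + 2 * l * e) := by rw [← pow_add]
    _ < 2 ^ (2 * a * 2 ^ (2 * a)) := by
        apply Nat.pow_lt_pow_right (by norm_num)
        -- bound each term
        set Q := 2 ^ (2 * a - 1) with hQ
        have hQ1 : 1 ≤ Q := Nat.one_le_two_pow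
        have hQ2 : 2 ^ (2 * a) = 2 * Q := by
          rw [hQ, ← pow_succ']
          congr 1
          omega
        have t1 : a * 2 ^ a * d ≤ a * Q := by
          calc a * 2 ^ a * d ≤ a * 2 ^ a * 2 ^ l := Nat.mul_le_mul_left _ hd2
          _ = a * 2 ^ (a + l) := by rw [mul_assoc, ← pow_add]
          _ ≤ a * Q := Nat.mul_le_mul_left a
                (Nat.pow_le_pow_right (by norm_num) (by omega))
        have t2 : 2 * l * e ≤ 2 * a := by
          calc 2 * l * e ≤ 2 * l * 2 ^ (K + 1) := Nat.mul_le_mul_left _ hek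
          _ = 2 * a := by rw [ha]; ring
        have hN : 2 * a * 2 ^ (2 * a) = 4 * a * Q := by rw [hQ2]; ring
        rw [hN]
        nlinarith [hQ1, ha4, t1, t2]
end
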